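/- arXiv:2505.21587 — 5 statements merged into one kernel-verified Lean document; each statement's English description precedes it below -/
import Mathlib

section
/- Let α and β be types, A : Finset α and B : Finset β, and let a₁ b₁ : α → ℕ and a₂ b₂ : β → ℕ be colorings. Assume the refinement condition: for all x ∈ A and y ∈ B, b₁ x = b₂ y implies a₁ x = a₂ y. If the multiset of a-colors on A differs from the multiset of a-colors on B (i.e., A.val.map a₁ ≠ B.val.map a₂), then the multiset of b-colors on A differs from the multiset of b-colors on B (i.e., A.val.map b₁ ≠ B.val.map b₂). -/
/-- Lemma 1: pointwise color reduction between two color-refinement models lifts to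
multisets of colors on finite sets of cells. -/
theorem multiset_color_reduction {α β : Type*} (A : Finset α) (B : Finset β)
    (a₁ b₁ : α → ℕ) (a₂ b₂ : β → ℕ)
    (hred : ∀ x ∈ A, ∀ y ∈ B, b₁ x = b₂ y → a₁ x = a₂ y)
    (hne : A.val.map a₁ ≠ B.val.map a₂) :
    A.val.map b₁ ≠ B.val.map b₂ := by
  intro h
  apply hne
  rw [← Multiset.rel_eq, Multiset.rel_map] at h ⊢
  refine h.mono ?_
  intro x hx y hy hxy
  exact hred x hx y hy hxy
end

section
/- Let α and β be types equipped with dimension functions dα : α → ℕ and dβ : β → ℕ, let A : Finset α and B : Finset β, and let a₁ b₁ : α → ℕ and a₂ b₂ : β → ℕ be colorings. Assume: (i) dimension-awareness of b: for all x ∈ A and y ∈ B, b₁ x = b₂ y implies dα x = dβ y; and (ii) dimension-wise refinement: for all x ∈ A and y ∈ B with dα x = dβ y, b₁ x = b₂ y implies a₁ x = a₂ y. If the multiset of a-colors on A differs from the multiset of a-colors on B (A.val.map a₁ ≠ B.val.map a₂), then the multiset of b-colors on A differs from the multiset of b-colors on B (A.val.map b₁ ≠ B.val.map b₂). -/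
lemma multiset_rel_mono_mem {α β : Type*} {r p : α → β → Prop} :
    ∀ {s : Multiset α} {t : Multiset β}, Multiset.Rel r s t →
      (∀ x ∈ s, ∀ y ∈ t, r x y → p x y) → Multiset.Rel p s t := by
  intro s t h
  induction h with
  | zero => intro _; exact Multiset.Rel.zero
  | @cons a b s t hab hst ih =>
      intro h
      exact Multiset.Rel.cons
        (h a (Multiset.mem_cons_self _ _) b (Multiset.mem_cons_self _ _) hab)
        (ih fun x hx y hy hr =>
          h x (Multiset.mem_cons_of_mem hx) y (Multiset.mem_cons_of_mem hy) hr)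

/-- Theorem 2 (Appendix): dimension-wise color reduction plus dimension-awareness of the
finer coloring lifts to multisets of colors over all cells. -/
theorem multiset_color_reduction_dimensionwise {α β : Type*}
    (dα : α → ℕ) (dβ : β → ℕ) (A : Finset α) (B : Finset β)
    (a₁ b₁ : α → ℕ) (a₂ b₂ : β → ℕ)
    (hdim : ∀ x ∈ A, ∀ y ∈ B, b₁ x = b₂ y → dα x = dβ y)
    (hred : ∀ x ∈ A, ∀ y ∈ B, dα x = dβ y → b₁ x = b₂ y → a₁ x = a₂ y)
    (hne : A.val.map a₁ ≠ B.val.map a₂) :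
    A.val.map b₁ ≠ B.val.map b₂ := by
  intro heq
  apply hne
  rw [← Multiset.rel_eq, Multiset.rel_map] at heq ⊢
  exact multiset_rel_mono_mem heq fun x hx y hy h =>
    hred x hx y hy (hdim x hx y hy h) h
end

section
/- Let G₁ be a simple graph on a vertex type V₁ and G₂ a simple graph on V₂, both locally finite (each vertex has a finite neighbor set). Let a₁ b₁ : V₁ → ℕ and a₂ b₂ : V₂ → ℕ be colorings, γ a type, and e₁ : V₁ → γ, e₂ : V₂ → γ arbitrary auxiliary data. Define the updated colorings a₁' v = (a₁ v, (G₁.neighborFinset v).val.map a₁), a₂' w = (a₂ w, (G₂.neighborFinset w).val.map a₂) (valued in ℕ × Multiset ℕ), and b₁' v = (b₁ v, (G₁.neighborFinset v).val.map b₁, e₁ v), b₂' w = (b₂ w, (G₂.neighborFinset w).val.map b₂, e₂ w) (valued in ℕ × Multiset ℕ × γ). If for all v : V₁ and w : V₂, b₁ v = b₂ w implies a₁ v = a₂ w, then for all v : V₁ and w : V₂, b₁' v = b₂' w implies a₁' v = a₂' w. -/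
/-- Inductive step of Theorem 1: cross-graph color refinement is preserved under one
WL-style update step, where the finer (CCNN) update additionally records arbitrary data. -/
theorem color_refinement_update_step {V₁ V₂ γ : Type*}
    (G₁ : SimpleGraph V₁) (G₂ : SimpleGraph V₂)
    [G₁.LocallyFinite] [G₂.LocallyFinite]
    (a₁ b₁ : V₁ → ℕ) (a₂ b₂ : V₂ → ℕ) (e₁ : V₁ → γ) (e₂ : V₂ → γ)
    (h : ∀ (v : V₁) (w : V₂), b₁ v = b₂ w → a₁ v = a₂ w) :
    ∀ (v : V₁) (w : V₂),
      (b₁ v, (G₁.neighborFinset v).val.map b₁, e₁ v) =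
        (b₂ w, (G₂.neighborFinset w).val.map b₂, e₂ w) →
      (a₁ v, (G₁.neighborFinset v).val.map a₁) =
        (a₂ w, (G₂.neighborFinset w).val.map a₂) := by
  intro v w hvw
  rw [Prod.ext_iff, Prod.ext_iff] at hvw
  obtain ⟨hb, hm, -⟩ := hvw
  refine Prod.ext (h v w hb) ?_
  rw [← Multiset.rel_eq, Multiset.rel_map] at hm ⊢
  exact hm.mono fun x _ y _ hxy => h x y hxy
end

section
/- Let G₁ be a finite simple graph on V₁ and G₂ a finite simple graph on V₂. Let pairA : ℕ × Multiset ℕ → ℕ and pairB : ℕ × Multiset ℕ × ℕ → ℕ be injective functions. Let a₁⁰ : V₁ → ℕ, a₂⁰ : V₂ → ℕ, b₁⁰ : V₁ → ℕ, b₂⁰ : V₂ → ℕ be initial colorings, and for each t ∈ ℕ let e₁ᵗ : V₁ → ℕ and e₂ᵗ : V₂ → ℕ be arbitrary auxiliary data. Define recursively: aᵢᵗ⁺¹ v = pairA (aᵢᵗ v, (Gᵢ.neighborFinset v).val.map aᵢᵗ) and bᵢᵗ⁺¹ v = pairB (bᵢᵗ v, (Gᵢ.neighborFinset v).val.map bᵢᵗ,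 eᵢᵗ v) for i = 1, 2. If for all v : V₁ and w : V₂, b₁⁰ v = b₂⁰ w implies a₁⁰ v = a₂⁰ w, then for every t ∈ ℕ and all v : V₁, w : V₂, b₁ᵗ v = b₂ᵗ w implies a₁ᵗ v = a₂ᵗ w. -/
/-- Induction of Theorem 1: the iterated 1-WL coloring (encoded via the injection `pairA`)
is topologically reduced to the iterated CCNN coloring (encoded via `pairB`, which at each
step additionally records arbitrary extra data `eᵗ`) at every iteration. -/
theorem wl_reduces_to_ccnn {V₁ V₂ : Type*} [Fintype V₁] [Fintype V₂]
    (G₁ : SimpleGraph V₁) (G₂ : SimpleGraph V₂)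
    [DecidableRel G₁.Adj] [DecidableRel G₂.Adj]
    (pairA : ℕ × Multiset ℕ → ℕ) (pairB : ℕ × Multiset ℕ × ℕ → ℕ)
    (hA : Function.Injective pairA) (hB : Function.Injective pairB)
    (a₁ : ℕ → V₁ → ℕ) (a₂ : ℕ → V₂ → ℕ) (b₁ : ℕ → V₁ → ℕ) (b₂ : ℕ → V₂ → ℕ)
    (e₁ : ℕ → V₁ → ℕ) (e₂ : ℕ → V₂ → ℕ)
    (ha₁ : ∀ t v, a₁ (t + 1) v = pairA (a₁ t v, (G₁.neighborFinset v).val.map (a₁ t)))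
    (ha₂ : ∀ t w, a₂ (t + 1) w = pairA (a₂ t w, (G₂.neighborFinset w).val.map (a₂ t)))
    (hb₁ : ∀ t v, b₁ (t + 1) v = pairB (b₁ t v, (G₁.neighborFinset v).val.map (b₁ t), e₁ t v))
    (hb₂ : ∀ t w, b₂ (t + 1) w = pairB (b₂ t w, (G₂.neighborFinset w).val.map (b₂ t), e₂ t w))
    (h0 : ∀ (v : V₁) (w : V₂), b₁ 0 v = b₂ 0 w → a₁ 0 v = a₂ 0 w) :
    ∀ (t : ℕ) (v : V₁) (w : V₂), b₁ t v = b₂ t w → a₁ t v = a₂ t w := by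
  intro t
  induction t with
  | zero => exact h0
  | succ t ih =>
    intro v w h
    rw [hb₁, hb₂] at h
    have h' := hB h
    have h1 : b₁ t v = b₂ t w := congrArg Prod.fst h'
    have h2 : (G₁.neighborFinset v).val.map (b₁ t)
        = (G₂.neighborFinset w).val.map (b₂ t) := congrArg (fun p => p.2.1) h'
    rw [ha₁, ha₂]
    congr 1
    refine Prod.ext (ih v w h1) ?_
    rw [← Multiset.rel_eq] at h2 ⊢
    rw [Multiset.rel_map] at h2 ⊢
    exact h2.mono fun x _ y _ hxy => ih x y hxy
end

section
/- There exist finite simple graphs G₁ (on vertex type V₁) and G₂ (on vertex type V₂) such that G₁ and G₂ are not isomorphic, and yet for every injective function pair : ℕ × Multiset ℕ → ℕ and every iteration t ∈ ℕ, the multisets of 1-WL colors agree: (Finset.univ : Finset V₁).val.map (wl₁ t) = (Finset.univ : Finset V₂).val.map (wl₂ t), where wlᵢ is the 1-WL coloring of Gᵢ from the constant initial coloring 0 via pair. -/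
/-- The 1-Weisfeiler–Lehman coloring of a finite simple graph, starting from the constant
initial coloring `0`, with multisets of neighbor colors encoded into `ℕ` by `pair`. -/
noncomputable def wl {V : Type*} [Fintype V] (G : SimpleGraph V)
    (pair : ℕ × Multiset ℕ → ℕ) : ℕ → V → ℕ
  | 0 => fun _ => 0
  | t + 1 => fun v =>
      letI : DecidableRel G.Adj := Classical.decRel _
      pair (wl G pair t v, (G.neighborFinset v).val.map (wl G pair t))

/-- The 6-cycle. -/
def C6 : SimpleGraph (Fin 6) where
  Adj i j := j = i + 1 ∨ i = j + 1
  symm := ⟨by intro i j; revert i j; decide⟩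
  loopless := ⟨by intro i; revert i; decide⟩

/-- Two disjoint triangles. -/
def TT : SimpleGraph (Fin 6) where
  Adj i j := i ≠ j ∧ i.val / 3 = j.val / 3
  symm := ⟨by intro i j; revert i j; decide⟩
  loopless := ⟨by intro i; revert i; decide⟩

instance instC6Dec : DecidableRel C6.Adj := fun _ _ => instDecidableOr
instance instTTDec : DecidableRel TT.Adj := fun _ _ => instDecidableAnd

lemma nf_indep {V : Type*} (G : SimpleGraph V) (v : V)
    (i1 i2 : Fintype (G.neighborSet v)) :
    @SimpleGraph.neighborFinset _ G v i1 = @SimpleGraph.neighborFinset _ G v i2 := by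
  cases Subsingleton.elim i1 i2; rfl

/-- The constant WL color sequence for a `d`-regular graph. -/
def wlc (pair : ℕ × Multiset ℕ → ℕ) (d : ℕ) : ℕ → ℕ
  | 0 => 0
  | t + 1 => pair (wlc pair d t, Multiset.replicate d (wlc pair d t))

lemma wl_const {V : Type*} [Fintype V] (G : SimpleGraph V)
    (pair : ℕ × Multiset ℕ → ℕ) (d : ℕ)
    (hdeg : ∀ v, letI : DecidableRel G.Adj := Classical.decRel _
      (G.neighborFinset v).card = d) :
    ∀ t v, wl G pair t v = wlc pair d t := by
  intro t
  induction t with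
  | zero => intro v; rfl
  | succ t ih =>
    intro v
    letI : DecidableRel G.Adj := Classical.decRel _
    show pair (wl G pair t v, (G.neighborFinset v).val.map (wl G pair t)) = _
    have h1 : (G.neighborFinset v).val.map (wl G pair t)
        = Multiset.replicate d (wlc pair d t) := by
      rw [Multiset.map_congr rfl (fun x _ => ih x), Multiset.map_const']
      rw [show (G.neighborFinset v).val.card = d from hdeg v]
    rw [ih v, h1]; rfl

lemma univ_map_const {V : Type*} [Fintype V] (f : V → ℕ) (c : ℕ)
    (h : ∀ v, f v = c) :
    (Finset.univ : Finset V).val.map f = Multiset.replicate (Fintype.card V) c := by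
  rw [Multiset.map_congr rfl (fun x _ => h x), Multiset.map_const']
  rfl

/-- Existence half of Theorem 1: there are non-isomorphic finite simple graphs that are
indistinguishable by the 1-WL test at every iteration. -/
theorem exists_nonisomorphic_wl_indistinguishable :
    ∃ (n₁ n₂ : ℕ) (G₁ : SimpleGraph (Fin n₁)) (G₂ : SimpleGraph (Fin n₂)),
      IsEmpty (G₁ ≃g G₂) ∧
      ∀ pair : ℕ × Multiset ℕ → ℕ, Function.Injective pair →
        ∀ t : ℕ, (Finset.univ : Finset (Fin n₁)).val.map (wl G₁ pair t) =
          (Finset.univ : Finset (Fin n₂)).val.map (wl G₂ pair t) := by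
  refine ⟨6, 6, C6, TT, ⟨fun e => ?_⟩, fun pair _ t => ?_⟩
  · -- TT has a triangle, C6 does not
    have hfree : ∀ a b c : Fin 6, ¬(C6.Adj a b ∧ C6.Adj b c ∧ C6.Adj a c) := by decide
    have h01 : TT.Adj 0 1 := by decide
    have h12 : TT.Adj 1 2 := by decide
    have h02 : TT.Adj 0 2 := by decide
    exact hfree (e.symm 0) (e.symm 1) (e.symm 2)
      ⟨e.symm.map_adj_iff.mpr h01, e.symm.map_adj_iff.mpr h12, e.symm.map_adj_iff.mpr h02⟩
  · have hd1 : ∀ v, letI : DecidableRel C6.Adj := Classical.decRel _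
        (C6.neighborFinset v).card = 2 := by
      intro v
      rw [nf_indep C6 v _ (@SimpleGraph.neighborSetFintype (Fin 6) C6 _ instC6Dec v)]
      revert v; decide
    have hd2 : ∀ v, letI : DecidableRel TT.Adj := Classical.decRel _
        (TT.neighborFinset v).card = 2 := by
      intro v
      rw [nf_indep TT v _ (@SimpleGraph.neighborSetFintype (Fin 6) TT _ instTTDec v)]
      revert v; decide
    rw [univ_map_const _ _ (wl_const C6 pair 2 hd1 t),
        univ_map_const _ _ (wl_const TT pair 2 hd2 t)]
end
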